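/- Fix N ≥ 1, let ζ := e^{2πi/N}, and let a, b, c : ℤ/Nℤ → ℂ. Let A, B, C be the N × N circulant matrices with entries A_{rs} = a(s−r), B_{rs} = b(s−r), C_{rs} = c(s−r) (indices in ℤ/Nℤ), and for each m ∈ ℤ/Nℤ set α_m := Σ_k a(k)ζ^{mk}, β_m := Σ_k b(k)ζ^{mk}, γ_m := Σ_k c(k)ζ^{mk}. Then the characteristic polynomial of the 2N × 2N block matrix M = [[A, B], [C, A]] factorizes as char(M)(X) = Π_{m ∈ ℤ/Nℤ} ( (X − α_m)² − β_m·γ_m ). In particular the eigenvalues of M, with multiplicity, are α_m ± √(β_m γ_m) for m ∈ ℤ/Nℤ. -/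

import Mathlib

open Finset Polynomial

section Aux

variable {N : ℕ} [NeZero N]

private lemma pow_val_mod {R : Type*} [CommRing R] {ζ : R} (h1 : ζ ^ N = 1) (a : ℕ) :
    ζ ^ (a % N) = ζ ^ a := by
  conv_rhs => rw [← Nat.div_add_mod a N]
  rw [pow_add, pow_mul, h1, one_pow, one_mul]

private lemma e_add {ζ : ℂ} (h1 : ζ ^ N = 1) (x y : ZMod N) :
    ζ ^ (x + y).val = ζ ^ x.val * ζ ^ y.val := by
  rw [ZMod.val_add, pow_val_mod h1, pow_add]

private lemma e_mul {ζ : ℂ} (h1 : ζ ^ N = 1) (x y : ZMod N) :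
    ζ ^ (x * y).val = (ζ ^ x.val) ^ y.val := by
  rw [ZMod.val_mul, pow_val_mod h1, pow_mul]

private lemma zmod_sum_val (f : ℕ → ℂ) :
    ∑ m : ZMod N, f m.val = ∑ i ∈ Finset.range N, f i := by
  refine Finset.sum_nbij' (fun m => m.val) (fun i => (i : ZMod N)) ?_ ?_ ?_ ?_ ?_
  · intro m _; exact Finset.mem_range.2 m.val_lt
  · intro i _; exact Finset.mem_univ _
  · intro m _; exact ZMod.natCast_rightInverse m
  · intro i hi; exact ZMod.val_cast_of_lt (Finset.mem_range.1 hi)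
  · intro m _; rfl

private lemma sum_e_eq_zero {ζ : ℂ} (hprim : IsPrimitiveRoot ζ N) {d : ZMod N} (hd : d ≠ 0) :
    ∑ m : ZMod N, ζ ^ (d * m).val = 0 := by
  have h1 : ζ ^ N = 1 := hprim.pow_eq_one
  have hcalc : ∀ m : ZMod N, ζ ^ (d * m).val = (ζ ^ d.val) ^ m.val := fun m => e_mul h1 d m
  simp_rw [hcalc]
  rw [zmod_sum_val (fun i => (ζ ^ d.val) ^ i)]
  have hdv : d.val ≠ 0 := fun h => hd ((ZMod.val_eq_zero d).1 h)
  have hne : ζ ^ d.val ≠ 1 :=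
    hprim.pow_ne_one_of_pos_of_lt hdv d.val_lt
  rw [geom_sum_eq hne]
  rw [← pow_mul, mul_comm, pow_mul, h1, one_pow, sub_self, zero_div]

/-- The Fourier matrix. -/
private noncomputable def Fmat (N : ℕ) [NeZero N] (ζ : ℂ) : Matrix (ZMod N) (ZMod N) ℂ :=
  Matrix.of fun r m => ζ ^ (r * m).val

/-- Candidate inverse. -/
private noncomputable def Fmat' (N : ℕ) [NeZero N] (ζ : ℂ) : Matrix (ZMod N) (ZMod N) ℂ :=
  Matrix.of fun m s => (N : ℂ)⁻¹ * ζ ^ ((-s) * m).val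

private lemma Fmat_mul_Fmat' {ζ : ℂ} (hprim : IsPrimitiveRoot ζ N) :
    Fmat N ζ * Fmat' N ζ = 1 := by
  have h1 : ζ ^ N = 1 := hprim.pow_eq_one
  ext r s
  simp only [Matrix.mul_apply, Fmat, Fmat', Matrix.of_apply]
  have hterm : ∀ m : ZMod N, ζ ^ (r * m).val * ((N : ℂ)⁻¹ * ζ ^ ((-s) * m).val)
      = (N : ℂ)⁻¹ * ζ ^ ((r - s) * m).val := by
    intro m
    have : (r - s) * m = r * m + (-s) * m := by ring
    rw [this, e_add h1]
    ring
  simp_rw [hterm, ← Finset.mul_sum]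
  rcases eq_or_ne r s with h | h
  · subst h
    have : ∀ m : ZMod N, ζ ^ ((r - r) * m).val = 1 := by
      intro m; simp
    simp_rw [this]
    simp only [Finset.sum_const, Finset.card_univ, ZMod.card, nsmul_eq_mul, mul_one]
    rw [Matrix.one_apply_eq]
    exact inv_mul_cancel₀ (Nat.cast_ne_zero.2 (NeZero.ne N))
  · rw [sum_e_eq_zero hprim (sub_ne_zero.2 h), mul_zero, Matrix.one_apply_ne h]

private lemma det_Fmat_ne_zero {ζ : ℂ} (hprim : IsPrimitiveRoot ζ N) :
    (Fmat N ζ).det ≠ 0 := by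
  intro h
  have := congrArg Matrix.det (Fmat_mul_Fmat' hprim)
  rw [Matrix.det_mul, h, zero_mul, Matrix.det_one] at this
  exact zero_ne_one this

/-- Circulant times Fourier matrix. -/
private lemma circulant_mul_Fmat {ζ : ℂ} (hprim : IsPrimitiveRoot ζ N)
    (a : ZMod N → ℂ) (A : Matrix (ZMod N) (ZMod N) ℂ)
    (hA : ∀ r s : ZMod N, A r s = a (s - r)) :
    A * Fmat N ζ = Fmat N ζ * Matrix.diagonal (fun m => ∑ k : ZMod N, a k * ζ ^ (m * k).val) := by
  have h1 : ζ ^ N = 1 := hprim.pow_eq_one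
  ext r m
  rw [Matrix.mul_apply, Matrix.mul_diagonal]
  simp only [Fmat, Matrix.of_apply, hA]
  rw [Finset.mul_sum]
  refine Fintype.sum_equiv (Equiv.subRight r) _ _ ?_
  intro k
  simp only [Equiv.subRight_apply]
  have hk : k * m = (k - r) * m + r * m := by ring
  rw [hk, e_add h1, mul_comm m (k - r)]
  ring

/-- Index equivalence. -/
private def sumProdEquiv (N : ℕ) : (ZMod N ⊕ ZMod N) ≃ Fin 2 × ZMod N where
  toFun := Sum.elim (fun m => (0, m)) (fun m => (1, m))
  invFun := fun p => if p.1 = 0 then .inl p.2 else .inr p.2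
  left_inv := by rintro (m | m) <;> simp
  right_inv := by
    rintro ⟨i, m⟩
    fin_cases i <;> simp

private lemma det_fromBlocks_diagonal {R : Type*} [CommRing R] (d1 d2 d3 d4 : ZMod N → R) :
    (Matrix.fromBlocks (Matrix.diagonal d1) (Matrix.diagonal d2)
        (Matrix.diagonal d3) (Matrix.diagonal d4)).det
      = ∏ m : ZMod N, (d1 m * d4 m - d2 m * d3 m) := by
  have hrw : Matrix.fromBlocks (Matrix.diagonal d1) (Matrix.diagonal d2)
        (Matrix.diagonal d3) (Matrix.diagonal d4)
      = (Matrix.blockDiagonal (fun m => !![d1 m, d2 m; d3 m, d4 m])).submatrix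
          (sumProdEquiv N) (sumProdEquiv N) := by
    ext i j
    rcases i with i | i <;> rcases j with j | j <;>
      · simp only [Matrix.fromBlocks, Matrix.submatrix_apply, sumProdEquiv, Equiv.coe_fn_mk,
          Sum.elim_inl, Sum.elim_inr, Matrix.of_apply, Matrix.blockDiagonal_apply,
          Matrix.diagonal_apply]
        rcases eq_or_ne i j with h | h <;> simp [h, Matrix.one_fin_two]
  rw [hrw, Matrix.det_submatrix_equiv_self, Matrix.det_blockDiagonal]
  refine Finset.prod_congr rfl fun m _ => ?_
  rw [Matrix.det_fin_two_of]

end Aux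

/-- The characteristic polynomial of the block matrix `[[A, B], [C, A]]`
built from circulant matrices `A, B, C` over `ℤ/Nℤ` with generating vectors
`a, b, c` factorizes as `Π_m ((X − α_m)² − β_m·γ_m)`, where
`α_m, β_m, γ_m` are the discrete Fourier transforms of `a, b, c` at `m`. -/
theorem charpoly_block_circulant (N : ℕ) [NeZero N] (a b c : ZMod N → ℂ)
    (ζ : ℂ) (hζ : ζ = Complex.exp (2 * Real.pi * Complex.I / N))
    (A B C : Matrix (ZMod N) (ZMod N) ℂ)
    (hA : ∀ r s : ZMod N, A r s = a (s - r))
    (hB : ∀ r s : ZMod N, B r s = b (s - r))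
    (hC : ∀ r s : ZMod N, C r s = c (s - r)) :
    (Matrix.fromBlocks A B C A).charpoly
      = ∏ m : ZMod N,
          ((X - Polynomial.C (∑ k : ZMod N, a k * ζ ^ (m * k).val)) ^ 2
            - Polynomial.C ((∑ k : ZMod N, b k * ζ ^ (m * k).val)
                * (∑ k : ZMod N, c k * ζ ^ (m * k).val))) := by
  have hprim : IsPrimitiveRoot ζ N := by
    rw [hζ]; exact Complex.isPrimitiveRoot_exp N (NeZero.ne N)
  set α : ZMod N → ℂ := fun m => ∑ k : ZMod N, a k * ζ ^ (m * k).val with hα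
  set β : ZMod N → ℂ := fun m => ∑ k : ZMod N, b k * ζ ^ (m * k).val with hβ
  set γ : ZMod N → ℂ := fun m => ∑ k : ZMod N, c k * ζ ^ (m * k).val with hγ
  set F := Fmat N ζ with hF
  set M := Matrix.fromBlocks A B C A with hM
  set M' := Matrix.fromBlocks (Matrix.diagonal α) (Matrix.diagonal β)
      (Matrix.diagonal γ) (Matrix.diagonal α) with hM'
  set G := Matrix.fromBlocks F 0 0 F with hG
  have hAF : A * F = F * Matrix.diagonal α := circulant_mul_Fmat hprim a A hA
  have hBF : B * F = F * Matrix.diagonal β := circulant_mul_Fmat hprim b B hB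
  have hCF : C * F = F * Matrix.diagonal γ := circulant_mul_Fmat hprim c C hC
  have hMG : M * G = G * M' := by
    rw [hM, hG, hM', Matrix.fromBlocks_multiply, Matrix.fromBlocks_multiply]
    simp [hAF, hBF, hCF]
  -- lift to polynomial matrices
  set Cc : ℂ →+* ℂ[X] := Polynomial.C with hCc
  set Gc := G.map Cc with hGc
  have hcomm : Matrix.charmatrix M * Gc = Gc * Matrix.charmatrix M' := by
    rw [Matrix.charmatrix, Matrix.charmatrix, sub_mul, mul_sub]
    congr 1
    · exact (Matrix.scalar_commute (X : ℂ[X]) (fun r' => Commute.all _ _) Gc).eq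
    · show (Cc.mapMatrix M) * Gc = Gc * (Cc.mapMatrix M')
      simp only [RingHom.mapMatrix_apply, hGc]
      rw [← Matrix.map_mul, hMG, Matrix.map_mul]
  have hdetGc : Gc.det ≠ 0 := by
    have h1 : Gc.det = Cc G.det := by
      rw [show Gc = Cc.mapMatrix G from rfl, ← RingHom.map_det]
    rw [h1, hCc]
    simp only [ne_eq, Polynomial.C_eq_zero]
    rw [hG, Matrix.det_fromBlocks_zero₂₁]
    exact mul_ne_zero (det_Fmat_ne_zero hprim) (det_Fmat_ne_zero hprim)
  have hdet : M.charpoly * Gc.det = M'.charpoly * Gc.det := by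
    rw [Matrix.charpoly, Matrix.charpoly, ← Matrix.det_mul, hcomm, Matrix.det_mul, mul_comm]
  have hchar : M.charpoly = M'.charpoly := mul_right_cancel₀ hdetGc hdet
  rw [hchar, Matrix.charpoly, Matrix.charmatrix_fromBlocks]
  have hd1 : Matrix.charmatrix (Matrix.diagonal α) = Matrix.diagonal fun m => X - Polynomial.C (α m) := by
    ext i j
    rcases eq_or_ne i j with h | h
    · subst h; simp
    · simp [h, Matrix.diagonal_apply_ne _ h]
  have hd2 : -(Matrix.diagonal β).map Polynomial.C = Matrix.diagonal fun m => -Polynomial.C (β m) := by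
    rw [Matrix.diagonal_map (by simp), Matrix.diagonal_neg]
  have hd3 : -(Matrix.diagonal γ).map Polynomial.C = Matrix.diagonal fun m => -Polynomial.C (γ m) := by
    rw [Matrix.diagonal_map (by simp), Matrix.diagonal_neg]
  rw [hd1, hd2, hd3, det_fromBlocks_diagonal]
  refine Finset.prod_congr rfl fun m _ => ?_
  rw [neg_mul_neg, sq, map_mul]
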